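/- Let f : U → ℝ² be a continuously differentiable map on an open set U ⊆ ℝⁿ (n ≥ 2) such that at every point of U the differential Df is surjective and its restriction to the orthogonal complement of its kernel has operator norm of inverse bounded by a constant c (i.e., ‖Df(x) v‖ ≥ c⁻¹‖v‖ for all v ⊥ ker Df(x)). Then for every compact K ⊆ U there is a constant C such that for every r > 0 and every disk D' ⊆ ℝ² of radius r, the Lebesgue measure of f⁻¹(D') ∩ K is at most C·r². -/

import Mathlib

open MeasureTheory MeasureTheory.Measure Metric Set Module
open scoped NNReal ENNReal Topology

set_option maxHeartbeats 2000000 in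
theorem local_bound (n : ℕ)
    (U : Set (EuclideanSpace ℝ (Fin n))) (hU : IsOpen U)
    (f : EuclideanSpace ℝ (Fin n) → EuclideanSpace ℝ (Fin 2))
    (hf : ContDiffOn ℝ 1 f U)
    (x₀ : EuclideanSpace ℝ (Fin n)) (hx₀ : x₀ ∈ U)
    (hsurj : Function.Surjective (fderiv ℝ f x₀)) :
    ∃ V : Set (EuclideanSpace ℝ (Fin n)), IsOpen V ∧ x₀ ∈ V ∧ ∃ C : ℝ, 0 ≤ C ∧
      ∀ r > (0:ℝ), ∀ y, volume (f ⁻¹' (Metric.ball y r) ∩ V) ≤ ENNReal.ofReal (C * r ^ 2) := by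
  classical
  set L := fderiv ℝ f x₀ with hLdef
  set E := LinearMap.ker L.toLinearMap with hEdef
  set P : EuclideanSpace ℝ (Fin n) →L[ℝ] E := E.orthogonalProjectionOnto with hPdef
  haveI : IsAddHaarMeasure ((volume : Measure (EuclideanSpace ℝ (Fin 2))).prod (volume : Measure ↥E)) :=
    MeasureTheory.Measure.prod.instIsAddHaarMeasure _ _
  haveI hFhaar : IsAddHaarMeasure (volume : Measure (EuclideanSpace ℝ (Fin 2) × ↥E)) := by
    rw [volume_eq_prod]; infer_instance
  -- strict derivative
  have hfd : HasStrictFDerivAt f L x₀ :=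
    (hf.contDiffAt (hU.mem_nhds hx₀)).hasStrictFDerivAt one_ne_zero
  -- the linear equivalence
  have hinj : Function.Injective (L.prod P) := by
    intro v w hvw
    have h1 : L v = L w := congrArg Prod.fst hvw
    have h2 : P v = P w := congrArg Prod.snd hvw
    have hmem : v - w ∈ E := by
      rw [hEdef, LinearMap.mem_ker, map_sub, sub_eq_zero]; exact h1
    have h3 : ((P (v - w) : E) : EuclideanSpace ℝ (Fin n)) = v - w :=
      Submodule.starProjection_eq_self_iff.mpr hmem
    have h4 : P (v - w) = 0 := by rw [map_sub, h2]; exact sub_self _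
    rw [h4] at h3
    have h5 : v - w = 0 := by simpa using h3.symm
    exact sub_eq_zero.mp h5
  have hrange : LinearMap.range L.toLinearMap = ⊤ := LinearMap.range_eq_top.mpr hsurj
  have hfr : finrank ℝ (EuclideanSpace ℝ (Fin n)) = finrank ℝ (EuclideanSpace ℝ (Fin 2) × ↥E) := by
    have h6 := LinearMap.finrank_range_add_finrank_ker (L.toLinearMap)
    rw [Module.finrank_prod]
    have h7 : LinearMap.range L.toLinearMap = ⊤ := hrange
    rw [h7, finrank_top] at h6
    have h8 : LinearMap.ker L.toLinearMap = E := rfl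
    rw [h8] at h6
    omega
  let A₀ : EuclideanSpace ℝ (Fin n) ≃ₗ[ℝ] EuclideanSpace ℝ (Fin 2) × ↥E :=
    LinearMap.linearEquivOfInjective (L.prod P).toLinearMap hinj hfr
  let A : EuclideanSpace ℝ (Fin n) ≃L[ℝ] EuclideanSpace ℝ (Fin 2) × ↥E :=
    A₀.toContinuousLinearEquiv
  have hAcoe : (A : EuclideanSpace ℝ (Fin n) →L[ℝ] EuclideanSpace ℝ (Fin 2) × ↥E) = L.prod P := by
    ext x <;> rfl
  set g : EuclideanSpace ℝ (Fin n) → EuclideanSpace ℝ (Fin 2) × ↥E := fun x => (f x, P x) with hgdef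
  have hg : HasStrictFDerivAt g (A : EuclideanSpace ℝ (Fin n) →L[ℝ] EuclideanSpace ℝ (Fin 2) × ↥E) x₀ := by
    rw [hAcoe]; exact hfd.prodMk P.hasStrictFDerivAt
  set ginv := hg.localInverse g A x₀ with hginvdef
  have hinv : HasStrictFDerivAt ginv (A.symm : EuclideanSpace ℝ (Fin 2) × ↥E →L[ℝ] EuclideanSpace ℝ (Fin n)) (g x₀) :=
    hg.to_localInverse
  have hh : HasStrictFDerivAt (⇑A ∘ ginv)
      (ContinuousLinearMap.id ℝ (EuclideanSpace ℝ (Fin 2) × ↥E)) (g x₀) := by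
    have := (A.toContinuousLinearMap.hasStrictFDerivAt (x := ginv (g x₀))).comp (g x₀) hinv
    rw [ContinuousLinearEquiv.coe_comp_coe_symm] at this
    exact this
  -- Jacobian bound for the almost-identity map
  have hdet : ENNReal.ofReal |(ContinuousLinearMap.id ℝ (EuclideanSpace ℝ (Fin 2) × ↥E)).det| < (2 : ℝ≥0) := by
    simp [ContinuousLinearMap.det]
  rcases ((addHaar_image_le_mul_of_det_lt volume (ContinuousLinearMap.id ℝ (EuclideanSpace ℝ (Fin 2) × ↥E)) hdet).and
    self_mem_nhdsWithin).exists with ⟨δ, hδ, δpos⟩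
  obtain ⟨s, hs, happrox⟩ := hh.approximates_deriv_on_nhds (c := δ) (Or.inr δpos)
  obtain ⟨ρ, ρpos, hρ⟩ := Metric.mem_nhds_iff.mp hs
  -- the neighborhood V
  have hWmem : ({x | ginv (g x) = x} ∩ g ⁻¹' (Metric.ball (g x₀) ρ)) ∈ nhds x₀ := by
    apply Filter.inter_mem hg.eventually_left_inverse
    exact hg.continuousAt.preimage_mem_nhds (Metric.ball_mem_nhds _ ρpos)
  set V := interior ({x | ginv (g x) = x} ∩ g ⁻¹' (Metric.ball (g x₀) ρ)) with hVdef
  refine ⟨V, isOpen_interior, mem_interior_iff_mem_nhds.mpr hWmem, ?_⟩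
  -- Haar comparison constant for A
  haveI : IsAddHaarMeasure ((volume : Measure (EuclideanSpace ℝ (Fin n))).map ⇑A) :=
    A.isAddHaarMeasure_map volume
  set κ : NNReal := addHaarScalarFactor ((volume : Measure (EuclideanSpace ℝ (Fin n))).map ⇑A)
    (volume : Measure (EuclideanSpace ℝ (Fin 2) × ↥E)) with hκdef
  have hmap : (volume : Measure (EuclideanSpace ℝ (Fin n))).map ⇑A
      = κ • (volume : Measure (EuclideanSpace ℝ (Fin 2) × ↥E)) :=
    isAddLeftInvariant_eq_smul _ _
  set B := volume (Metric.ball (0 : EuclideanSpace ℝ (Fin 2)) 1) with hBdef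
  set D := volume (Metric.ball (P x₀) ρ) with hDdef
  have hBfin : B < ⊤ := measure_ball_lt_top
  have hDfin : D < ⊤ := measure_ball_lt_top
  set M : ℝ≥0∞ := 2 * κ * B * D with hMdef
  have hMfin : M ≠ ⊤ := by
    finiteness
  refine ⟨M.toReal, ENNReal.toReal_nonneg, ?_⟩
  intro r hr y
  -- the key inclusion
  set T := (Metric.ball y r ×ˢ Metric.ball (P x₀) ρ) ∩ Metric.ball (g x₀) ρ with hTdef
  have hTs : T ⊆ s := fun z hz => hρ hz.2
  have hsub : f ⁻¹' (Metric.ball y r) ∩ V ⊆ ginv '' T := by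
    intro x hx
    have hxW : x ∈ {x | ginv (g x) = x} ∩ g ⁻¹' (Metric.ball (g x₀) ρ) := interior_subset hx.2
    have hgx : g x ∈ T := by
      refine ⟨⟨hx.1, ?_⟩, hxW.2⟩
      have : dist (P x) (P x₀) ≤ dist (g x) (g x₀) := by
        rw [show dist (g x) (g x₀) = max (dist (f x) (f x₀)) (dist (P x) (P x₀)) from Prod.dist_eq]
        exact le_max_right _ _
      exact lt_of_le_of_lt this hxW.2
    exact ⟨g x, hgx, hxW.1⟩
  -- measure computation
  set S := (⇑A ∘ ginv) '' T with hSdef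
  have hginvT : ginv '' T ⊆ ⇑A ⁻¹' (toMeasurable volume S) := by
    intro z hz
    rcases hz with ⟨t, ht, rfl⟩
    exact subset_toMeasurable _ _ ⟨t, ht, rfl⟩
  have hS2 : volume S ≤ 2 * volume T := by
    have := hδ T (⇑A ∘ ginv) (happrox.mono_set hTs)
    simpa [S, Function.comp_def] using this
  have hvolT : volume T ≤ ENNReal.ofReal (r ^ 2) * B * D := by
    calc volume T ≤ volume (Metric.ball y r ×ˢ Metric.ball (P x₀) ρ) :=
          measure_mono inter_subset_left
      _ = volume (Metric.ball y r) * D := by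
          rw [volume_eq_prod, Measure.prod_prod]
      _ = ENNReal.ofReal (r ^ 2) * B * D := by
          rw [Measure.addHaar_ball _ _ hr.le, finrank_euclideanSpace_fin]
  calc volume (f ⁻¹' (Metric.ball y r) ∩ V)
      ≤ volume (⇑A ⁻¹' (toMeasurable volume S)) :=
        measure_mono (hsub.trans hginvT)
    _ = ((volume : Measure (EuclideanSpace ℝ (Fin n))).map ⇑A) (toMeasurable volume S) := by
        rw [Measure.map_apply (A.continuous.measurable) (measurableSet_toMeasurable _ _)]
    _ = κ • volume (toMeasurable volume S) := by rw [hmap]; rfl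
    _ = κ • volume S := by rw [measure_toMeasurable]
    _ ≤ κ • (2 * volume T) := by gcongr
    _ ≤ κ • (2 * (ENNReal.ofReal (r ^ 2) * B * D)) := by
        gcongr
    _ = ENNReal.ofReal (r ^ 2) * M := by
        simp only [hMdef, ENNReal.smul_def, smul_eq_mul]
        ring
    _ ≤ ENNReal.ofReal (M.toReal * r ^ 2) := by
        rw [ENNReal.ofReal_mul ENNReal.toReal_nonneg, ENNReal.ofReal_toReal hMfin]
        rw [mul_comm]

/-- A C¹ submersion `f : U → ℝ²` whose differential is uniformly bounded below on the
orthogonal complement of its kernel pulls back disks of radius `r` to sets of measure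
at most `C r²` on any compact subset of `U`. -/
theorem stmt_14 (n : ℕ) (hn : 2 ≤ n)
    (U : Set (EuclideanSpace ℝ (Fin n))) (hU : IsOpen U)
    (f : EuclideanSpace ℝ (Fin n) → EuclideanSpace ℝ (Fin 2))
    (hf : ContDiffOn ℝ 1 f U)
    (c : ℝ) (hc : 0 < c)
    (hsurj : ∀ x ∈ U, Function.Surjective (fderiv ℝ f x))
    (hlow : ∀ x ∈ U, ∀ v ∈ (LinearMap.ker (fderiv ℝ f x).toLinearMap)ᗮ,
      c⁻¹ * ‖v‖ ≤ ‖fderiv ℝ f x v‖) :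
    ∀ K : Set (EuclideanSpace ℝ (Fin n)), K ⊆ U → IsCompact K →
      ∃ C : ℝ, ∀ r > (0 : ℝ), ∀ y : EuclideanSpace ℝ (Fin 2),
        volume (f ⁻¹' (Metric.ball y r) ∩ K) ≤ ENNReal.ofReal (C * r ^ 2) := by
  intro K hKU hK
  classical
  have key : ∀ x : EuclideanSpace ℝ (Fin n), ∃ VC : Set (EuclideanSpace ℝ (Fin n)) × ℝ,
      x ∈ K → (IsOpen VC.1 ∧ x ∈ VC.1 ∧ 0 ≤ VC.2 ∧
        ∀ r > (0:ℝ), ∀ y, volume (f ⁻¹' (Metric.ball y r) ∩ VC.1) ≤ ENNReal.ofReal (VC.2 * r ^ 2)) := by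
    intro x
    by_cases hx : x ∈ K
    · obtain ⟨V, hVo, hVx, C, hC0, hCb⟩ :=
        local_bound n U hU f hf x (hKU hx) (hsurj x (hKU hx))
      exact ⟨(V, C), fun _ => ⟨hVo, hVx, hC0, hCb⟩⟩
    · exact ⟨(∅, 0), fun h => absurd h hx⟩
  choose VC hVC using key
  obtain ⟨t, htK, htcov⟩ := hK.elim_nhds_subcover (fun x => (VC x).1)
    (fun x hx => ((hVC x hx).1).mem_nhds ((hVC x hx).2.1))
  refine ⟨∑ x ∈ t, (VC x).2, ?_⟩
  intro r hr y
  have hsub : f ⁻¹' (Metric.ball y r) ∩ K ⊆ ⋃ x ∈ t, f ⁻¹' (Metric.ball y r) ∩ (VC x).1 := by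
    intro z hz
    obtain ⟨x, hxt, hxz⟩ := mem_iUnion₂.mp (htcov hz.2)
    exact mem_iUnion₂.mpr ⟨x, hxt, hz.1, hxz⟩
  calc volume (f ⁻¹' (Metric.ball y r) ∩ K)
      ≤ ∑ x ∈ t, volume (f ⁻¹' (Metric.ball y r) ∩ (VC x).1) :=
        (measure_mono hsub).trans (measure_biUnion_finset_le t _)
    _ ≤ ∑ x ∈ t, ENNReal.ofReal ((VC x).2 * r ^ 2) := by
        refine Finset.sum_le_sum fun x hx => ?_
        exact ((hVC x (htK x hx)).2.2.2) r hr y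
    _ = ENNReal.ofReal (∑ x ∈ t, (VC x).2 * r ^ 2) := by
        rw [ENNReal.ofReal_sum_of_nonneg]
        intro x hx
        exact mul_nonneg ((hVC x (htK x hx)).2.2.1) (sq_nonneg r)
    _ = ENNReal.ofReal ((∑ x ∈ t, (VC x).2) * r ^ 2) := by
        rw [Finset.sum_mul]
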